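/- For every integer r ≥ 2, the sequence (1, r, C(r,2)+r−1, C(r,2)) is a pure O-sequence, where C(n,k) denotes the binomial coefficient. -/

import Mathlib

/-- The degree of a monomial, modeled as a finitely supported exponent vector. -/
def monDeg {r : ℕ} (m : Fin r →₀ ℕ) : ℕ := m.sum fun _ e => e

/-- A (monomial) order ideal: a finite nonempty set of monomials closed under divisibility. -/
def IsOrderIdeal {r : ℕ} (X : Finset (Fin r →₀ ℕ)) : Prop :=
  X.Nonempty ∧ ∀ m ∈ X, ∀ n : Fin r →₀ ℕ, n ≤ m → n ∈ X

/-- An order ideal is pure if all its maximal monomials (w.r.t. divisibility) have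
the same degree. -/
def IsPureSet {r : ℕ} (X : Finset (Fin r →₀ ℕ)) : Prop :=
  ∀ m ∈ X, ∀ n ∈ X, (∀ p ∈ X, m ≤ p → p = m) → (∀ p ∈ X, n ≤ p → p = n) →
    monDeg m = monDeg n

/-- The number of monomials of `X` of degree `i`. -/
def degCount {r : ℕ} (X : Finset (Fin r →₀ ℕ)) (i : ℕ) : ℕ :=
  (X.filter fun m => monDeg m = i).card

/-- `h` is the h-vector `(h_0, …, h_e)` of `X`, where `e` is the top degree of `X`. -/
def IsHVectorOf {r : ℕ} (X : Finset (Fin r →₀ ℕ)) (h : List ℕ) : Prop :=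
  h ≠ [] ∧ (∀ i, degCount X i = h.getD i 0) ∧ degCount X (h.length - 1) ≠ 0

/-- A finite sequence is an O-sequence if it is the h-vector of a monomial order ideal. -/
def IsOSequence (h : List ℕ) : Prop :=
  ∃ (r : ℕ) (X : Finset (Fin r →₀ ℕ)), IsOrderIdeal X ∧ IsHVectorOf X h

/-- A finite sequence is a pure O-sequence if it is the h-vector of a pure monomial
order ideal. -/
def IsPureOSequence (h : List ℕ) : Prop :=
  ∃ (r : ℕ) (X : Finset (Fin r →₀ ℕ)), IsOrderIdeal X ∧ IsPureSet X ∧ IsHVectorOf X h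

lemma monDeg_add {r : ℕ} (a b : Fin r →₀ ℕ) : monDeg (a + b) = monDeg a + monDeg b :=
  Finsupp.sum_add_index' (fun _ => rfl) (fun _ _ _ => rfl)

lemma monDeg_single {r : ℕ} (k : Fin r) (n : ℕ) : monDeg (Finsupp.single k n) = n :=
  Finsupp.sum_single_index rfl

lemma monDeg_eq_zero {r : ℕ} {m : Fin r →₀ ℕ} : monDeg m = 0 ↔ m = 0 := by
  constructor
  · intro h
    ext k
    by_contra hk
    have hmem : k ∈ m.support := Finsupp.mem_support_iff.mpr (by simpa using hk)
    have := Finset.sum_eq_zero_iff.mp h k hmem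
    simp at this hk
    exact hk this
  · rintro rfl; rfl

lemma exists_add_of_le' {r : ℕ} {a b : Fin r →₀ ℕ} (h : a ≤ b) : ∃ c, b = a + c :=
  le_iff_exists_add.mp h

lemma monDeg_mono {r : ℕ} {a b : Fin r →₀ ℕ} (h : a ≤ b) : monDeg a ≤ monDeg b := by
  obtain ⟨c, rfl⟩ := exists_add_of_le' h
  rw [monDeg_add]; omega

lemma eq_of_le_of_deg_eq {r : ℕ} {a b : Fin r →₀ ℕ} (h : a ≤ b) (hd : monDeg a = monDeg b) :
    a = b := by
  obtain ⟨c, rfl⟩ := exists_add_of_le' h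
  rw [monDeg_add] at hd
  have : c = 0 := monDeg_eq_zero.mp (by omega)
  simp [this]

lemma deg_one {r : ℕ} {m : Fin r →₀ ℕ} (h : monDeg m = 1) : ∃ k, m = Finsupp.single k 1 := by
  have hm : m ≠ 0 := by intro h0; rw [h0] at h; simp [monDeg] at h
  obtain ⟨k, hk⟩ := Finsupp.ne_iff.mp hm
  simp at hk
  have hle : Finsupp.single k 1 ≤ m := Finsupp.single_le_iff.mpr (by omega)
  obtain ⟨c, rfl⟩ := exists_add_of_le' hle
  rw [monDeg_add, monDeg_single] at h
  have : c = 0 := monDeg_eq_zero.mp (by omega)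
  exact ⟨k, by simp [this]⟩

noncomputable def gen2 {r : ℕ} (i j : Fin r) : Fin r →₀ ℕ :=
  Finsupp.single i 1 + Finsupp.single j 2

lemma monDeg_gen2 {r : ℕ} (i j : Fin r) : monDeg (gen2 i j) = 3 := by
  rw [gen2, monDeg_add, monDeg_single, monDeg_single]

def pairs (r : ℕ) : Finset (Fin r × Fin r) := Finset.univ.filter (fun p => p.1 < p.2)

noncomputable def Xset (r : ℕ) : Finset (Fin r →₀ ℕ) :=
  (pairs r).biUnion (fun p => Finset.Iic (gen2 p.1 p.2))

lemma mem_Xset {r : ℕ} {m : Fin r →₀ ℕ} :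
    m ∈ Xset r ↔ ∃ i j : Fin r, i < j ∧ m ≤ gen2 i j := by
  simp [Xset, pairs, Finset.mem_biUnion, Finset.mem_filter]

lemma pairs_card (r : ℕ) : (pairs r).card = r.choose 2 := by
  have h := Finset.card_powersetCard 2 (Finset.univ : Finset (Fin r))
  rw [Finset.card_univ, Fintype.card_fin] at h
  rw [← h]
  apply Finset.card_bij (fun p _ => ({p.1, p.2} : Finset (Fin r)))
  · rintro ⟨i, j⟩ hp
    simp [pairs] at hp
    simp [Finset.mem_powersetCard]
    rw [Finset.card_insert_of_notMem (by simp [hp.ne]), Finset.card_singleton]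
  · rintro ⟨i, j⟩ hp ⟨i', j'⟩ hp' h
    simp [pairs] at hp hp'
    have : ({i, j} : Set (Fin r)) = {i', j'} := by
      have := congrArg (fun s : Finset (Fin r) => (s : Set (Fin r))) h
      simpa using this
    rcases Set.pair_eq_pair_iff.mp this with ⟨rfl, rfl⟩ | ⟨rfl, rfl⟩
    · rfl
    · exact absurd (hp.trans hp') (lt_irrefl _)
  · intro s hs
    simp [Finset.mem_powersetCard] at hs
    obtain ⟨a, b, hab, rfl⟩ := Finset.card_eq_two.mp hs
    rcases lt_or_gt_of_ne hab with h | h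
    · exact ⟨(a, b), by simp [pairs, h], rfl⟩
    · exact ⟨(b, a), by simp [pairs, h], by rw [Finset.pair_comm]⟩

lemma support_pair {r : ℕ} {i j : Fin r} (hij : i ≠ j) {a b : ℕ} (ha : a ≠ 0) (hb : b ≠ 0) :
    (Finsupp.single i a + Finsupp.single j b).support = {i, j} := by
  rw [Finsupp.support_add_eq, Finsupp.support_single_ne_zero _ ha,
    Finsupp.support_single_ne_zero _ hb]
  · rfl
  · rw [Finsupp.support_single_ne_zero _ ha, Finsupp.support_single_ne_zero _ hb]
    simpa using hij

lemma pair_inj {r : ℕ} {i j i' j' : Fin r} (hij : i < j) (hij' : i' < j') {a b : ℕ}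
    (ha : a ≠ 0) (hb : b ≠ 0)
    (h : Finsupp.single i a + Finsupp.single j b = Finsupp.single i' a + Finsupp.single j' b) :
    i = i' ∧ j = j' := by
  have hs := congrArg Finsupp.support h
  rw [support_pair hij.ne ha hb, support_pair hij'.ne ha hb] at hs
  have : ({i, j} : Set (Fin r)) = {i', j'} := by
    have := congrArg (fun s : Finset (Fin r) => (s : Set (Fin r))) hs
    simpa using this
  rcases Set.pair_eq_pair_iff.mp this with ⟨rfl, rfl⟩ | ⟨rfl, rfl⟩
  · exact ⟨rfl, rfl⟩
  · exact absurd (hij.trans hij') (lt_irrefl _)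

lemma deg2_classify {r : ℕ} {m : Fin r →₀ ℕ} (hm : m ∈ Xset r) (hd : monDeg m = 2) :
    (∃ i j : Fin r, i < j ∧ m = Finsupp.single i 1 + Finsupp.single j 1) ∨
    (∃ k : Fin r, (k : ℕ) ≠ 0 ∧ m = Finsupp.single k 2) := by
  obtain ⟨i, j, hij, hle⟩ := mem_Xset.mp hm
  obtain ⟨c, hc⟩ := exists_add_of_le' hle
  have hdc : monDeg c = 1 := by
    have := monDeg_gen2 i j
    rw [hc, monDeg_add, hd] at this
    omega
  obtain ⟨k, rfl⟩ := deg_one hdc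
  have hk : k = i ∨ k = j := by
    by_contra hk
    push_neg at hk
    have := DFunLike.congr_fun hc k
    simp [gen2, Finsupp.single_apply, (Ne.symm hk.1), (Ne.symm hk.2)] at this
  have hj0 : (j : ℕ) ≠ 0 := by
    have := hij
    rw [Fin.lt_def] at this
    omega
  rcases hk with rfl | rfl
  · right
    refine ⟨j, hj0, ?_⟩
    have : Finsupp.single k 1 + m = Finsupp.single k 1 + Finsupp.single j 2 := by
      rw [add_comm (Finsupp.single k 1) m, ← hc, gen2]
    exact add_left_cancel this
  · left
    refine ⟨i, k, hij, ?_⟩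
    have h2 : Finsupp.single k (2 : ℕ) = Finsupp.single k 1 + Finsupp.single k 1 := by
      rw [← Finsupp.single_add]
    have : m + Finsupp.single k 1 = (Finsupp.single i 1 + Finsupp.single k 1) +
        Finsupp.single k 1 := by
      rw [← hc, gen2, h2, add_assoc]
    exact add_right_cancel this

lemma gen2_mem {r : ℕ} {i j : Fin r} (hij : i < j) : gen2 i j ∈ Xset r :=
  mem_Xset.mpr ⟨i, j, hij, le_refl _⟩

lemma single_le_single_two {r : ℕ} (k : Fin r) : Finsupp.single k 1 ≤ Finsupp.single k 2 :=
  Finsupp.single_le_iff.mpr (by simp)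

lemma mixed_mem {r : ℕ} {i j : Fin r} (hij : i < j) :
    Finsupp.single i 1 + Finsupp.single j 1 ∈ Xset r :=
  mem_Xset.mpr ⟨i, j, hij, add_le_add_right (single_le_single_two j) _⟩

lemma sq_mem {r : ℕ} {k : Fin r} (hk : (k : ℕ) ≠ 0) : Finsupp.single k 2 ∈ Xset r := by
  refine mem_Xset.mpr ⟨⟨0, k.pos⟩, k, ?_, le_add_self⟩
  · rw [Fin.lt_def]; simpa using Nat.pos_of_ne_zero hk

lemma single_mem {r : ℕ} (hr : 2 ≤ r) (k : Fin r) : Finsupp.single k 1 ∈ Xset r := by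
  by_cases hk : (k : ℕ) = 0
  · refine mem_Xset.mpr ⟨k, ⟨1, by omega⟩, ?_, self_le_add_right _ _⟩
    rw [Fin.lt_def]; simp [hk]
  · exact mem_Xset.mpr ⟨⟨0, k.pos⟩, k,
      by rw [Fin.lt_def]; simpa using Nat.pos_of_ne_zero hk,
      le_trans (single_le_single_two k) le_add_self⟩

lemma zero_mem {r : ℕ} (hr : 2 ≤ r) : (0 : Fin r →₀ ℕ) ∈ Xset r :=
  mem_Xset.mpr ⟨⟨0, by omega⟩, ⟨1, by omega⟩, by rw [Fin.lt_def]; simp, zero_le⟩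

lemma mixed_ne_sq {r : ℕ} {i j k : Fin r} (hij : i ≠ j) :
    Finsupp.single i 1 + Finsupp.single j 1 ≠ Finsupp.single k 2 := by
  intro h
  have hs := congrArg Finsupp.support h
  rw [support_pair hij one_ne_zero one_ne_zero,
    Finsupp.support_single_ne_zero _ two_ne_zero] at hs
  have hi : i ∈ ({i, j} : Finset (Fin r)) := Finset.mem_insert_self i {j}
  have hj : j ∈ ({i, j} : Finset (Fin r)) := by simp
  rw [hs] at hi hj
  exact hij ((Finset.mem_singleton.mp hi).trans (Finset.mem_singleton.mp hj).symm)

lemma deg_le_three {r : ℕ} {m : Fin r →₀ ℕ} (hm : m ∈ Xset r) : monDeg m ≤ 3 := by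
  obtain ⟨i, j, _, hle⟩ := mem_Xset.mp hm
  have := monDeg_mono hle
  rwa [monDeg_gen2] at this

/-- For every integer `r ≥ 2`, the sequence `(1, r, C(r,2)+r-1, C(r,2))` is a pure
O-sequence. -/
theorem pure_special_sequence' (r : ℕ) (hr : 2 ≤ r) :
    IsPureOSequence [1, r, r.choose 2 + r - 1, r.choose 2] := by
  classical

  classical
  -- degree 0 count
  have h0 : (Xset r).filter (fun m => monDeg m = 0) = {0} := by
    ext m
    simp only [Finset.mem_filter, Finset.mem_singleton]
    constructor
    · rintro ⟨_, hd⟩; exact monDeg_eq_zero.mp hd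
    · rintro rfl; exact ⟨zero_mem hr, rfl⟩
  -- degree 1
  have h1 : (Xset r).filter (fun m => monDeg m = 1) =
      Finset.univ.image (fun k : Fin r => Finsupp.single k 1) := by
    ext m
    simp only [Finset.mem_filter, Finset.mem_image, Finset.mem_univ, true_and]
    constructor
    · rintro ⟨_, hd⟩
      obtain ⟨k, rfl⟩ := deg_one hd
      exact ⟨k, rfl⟩
    · rintro ⟨k, rfl⟩
      exact ⟨single_mem hr k, monDeg_single k 1⟩
  have c1 : ((Xset r).filter (fun m => monDeg m = 1)).card = r := by
    rw [h1, Finset.card_image_of_injective _ (Finsupp.single_left_injective one_ne_zero)]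
    simp
  -- degree 3
  have h3 : (Xset r).filter (fun m => monDeg m = 3) =
      (pairs r).image (fun p => gen2 p.1 p.2) := by
    ext m
    simp only [Finset.mem_filter, Finset.mem_image]
    constructor
    · rintro ⟨hm, hd⟩
      obtain ⟨i, j, hij, hle⟩ := mem_Xset.mp hm
      refine ⟨(i, j), by simp [pairs, hij], ?_⟩
      exact (eq_of_le_of_deg_eq hle (by rw [hd, monDeg_gen2])).symm
    · rintro ⟨⟨i, j⟩, hp, rfl⟩
      simp [pairs] at hp
      exact ⟨gen2_mem hp, monDeg_gen2 i j⟩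
  have c3 : ((Xset r).filter (fun m => monDeg m = 3)).card = r.choose 2 := by
    rw [h3, Finset.card_image_of_injOn, pairs_card]
    rintro ⟨i, j⟩ hp ⟨i', j'⟩ hp' h
    simp [pairs] at hp hp'
    obtain ⟨rfl, rfl⟩ := pair_inj hp hp' one_ne_zero two_ne_zero h
    rfl
  -- degree 2
  have h2 : (Xset r).filter (fun m => monDeg m = 2) =
      (pairs r).image (fun p => Finsupp.single p.1 1 + Finsupp.single p.2 1) ∪
      (Finset.univ.filter (fun k : Fin r => (k : ℕ) ≠ 0)).image
        (fun k => Finsupp.single k 2) := by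
    ext m
    simp only [Finset.mem_filter, Finset.mem_union, Finset.mem_image, Finset.mem_univ, true_and]
    constructor
    · rintro ⟨hm, hd⟩
      rcases deg2_classify hm hd with ⟨i, j, hij, rfl⟩ | ⟨k, hk, rfl⟩
      · exact Or.inl ⟨(i, j), by simp [pairs, hij], rfl⟩
      · exact Or.inr ⟨k, hk, rfl⟩
    · rintro (⟨⟨i, j⟩, hp, rfl⟩ | ⟨k, hk, rfl⟩)
      · simp [pairs] at hp
        exact ⟨mixed_mem hp, by rw [monDeg_add, monDeg_single, monDeg_single]⟩
      · exact ⟨sq_mem hk, monDeg_single k 2⟩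
  have c2 : ((Xset r).filter (fun m => monDeg m = 2)).card = r.choose 2 + r - 1 := by
    rw [h2, Finset.card_union_of_disjoint, Finset.card_image_of_injOn,
      Finset.card_image_of_injOn, pairs_card]
    · have : (Finset.univ.filter (fun k : Fin r => (k : ℕ) ≠ 0)) =
          Finset.univ.erase (⟨0, by omega⟩ : Fin r) := by
        ext k
        simp [Finset.mem_erase, Fin.ext_iff]
      rw [this, Finset.card_erase_of_mem (Finset.mem_univ _), Finset.card_univ,
        Fintype.card_fin]
      have := Nat.choose_pos (k := 2) hr
      omega
    · exact Set.InjOn.mono (Set.subset_univ _)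
        (Finsupp.single_left_injective two_ne_zero).injOn
    · rintro ⟨i, j⟩ hp ⟨i', j'⟩ hp' h
      simp [pairs] at hp hp'
      obtain ⟨rfl, rfl⟩ := pair_inj hp hp' one_ne_zero one_ne_zero h
      rfl
    · rw [Finset.disjoint_left]
      rintro m hm hm'
      simp only [Finset.mem_image, Finset.mem_filter, Finset.mem_univ, true_and] at hm hm'
      obtain ⟨⟨i, j⟩, hp, rfl⟩ := hm
      obtain ⟨k, hk, heq⟩ := hm'
      simp [pairs] at hp
      exact mixed_ne_sq hp.ne heq.symm
  refine ⟨r, Xset r, ⟨⟨0, zero_mem hr⟩, ?_⟩, ?_, ?_, ?_, ?_⟩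
  · intro m hm n hle
    obtain ⟨i, j, hij, h⟩ := mem_Xset.mp hm
    exact mem_Xset.mpr ⟨i, j, hij, hle.trans h⟩
  · intro m hm n hn hmax hnmax
    obtain ⟨i, j, hij, hle⟩ := mem_Xset.mp hm
    have hm3 := hmax _ (gen2_mem hij) hle
    obtain ⟨i', j', hij', hle'⟩ := mem_Xset.mp hn
    have hn3 := hnmax _ (gen2_mem hij') hle'
    rw [← hm3, ← hn3, monDeg_gen2, monDeg_gen2]
  · simp
  · intro i
    match i with
    | 0 => simp [degCount, h0]
    | 1 => simpa [degCount] using c1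
    | 2 => simpa [degCount] using c2
    | 3 => simpa [degCount] using c3
    | (n + 4) =>
      have he : (Xset r).filter (fun m => monDeg m = n + 4) = ∅ := by
        refine Finset.filter_eq_empty_iff.mpr fun {m} hm => ?_
        have := deg_le_three hm
        omega
      simp [degCount, he, List.getD]
  · show degCount (Xset r) ([1, r, r.choose 2 + r - 1, r.choose 2].length - 1) ≠ 0
    simp only [List.length_cons, List.length_nil]
    have : (4 : ℕ) - 1 = 3 := rfl
    rw [this]
    show ((Xset r).filter (fun m => monDeg m = 3)).card ≠ 0
    rw [c3]
    exact (Nat.choose_pos hr).ne'
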